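/- Let m > 2 be an integer and let k be a positive multiple of m. Let S be a finite set of k points in ℝ², let ξ₀ ≤ ξ₁ ≤ … ≤ ξ_m be real numbers, and let S = S₀ ∪ S₁ ∪ … ∪ S_{m−1} be a partition of S such that |S_i| = k/m and every point p ∈ S_i satisfies ξ_i ≤ p_x ≤ ξ_{i+1} for each i. Then the sum of the intra-strip x-weights of the middle strips satisfies Σ_{i=1}^{m−2} w_x(S_i) ≤ w_x(S)/(m−2). -/

import Mathlib

open Finset

/-- The sum of x-coordinate distances over all unordered pairs of distinct points of `S`. -/
noncomputable def wx (S : Finset (Fin 2 → ℝ)) : ℝ := (∑ p ∈ S, ∑ q ∈ S, |p 0 - q 0|) / 2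

lemma tele_sum (ξ : ℕ → ℝ) (a b : ℕ) (hab : a ≤ b) :
    ∑ i ∈ Finset.Ico a b, (ξ (i+1) - ξ i) = ξ b - ξ a := by
  induction b, hab using Nat.le_induction with
  | base => simp
  | succ b hab ih => rw [Finset.sum_Ico_succ_top hab, ih]; ring

/-- If `S` (of size `k`, a multiple of `m > 2`) is partitioned into `m` vertical strips
`S₀, …, S_{m−1}` of `k/m` points each, with strip `i` lying between x-coordinates `ξ_i`
and `ξ_{i+1}`, then the total intra-strip x-weight of the middle strips `S₁, …, S_{m−2}`
is at most `w_x(S)/(m−2)`. -/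
theorem middle_strips_bound
    (m k : ℕ) (hm : 2 < m) (hk : 0 < k) (hmk : m ∣ k)
    (Sc : ℕ → Finset (Fin 2 → ℝ)) (ξ : ℕ → ℝ)
    (hξ : ∀ i < m, ξ i ≤ ξ (i + 1))
    (S : Finset (Fin 2 → ℝ)) (hScard : S.card = k)
    (hunion : S = (Finset.range m).biUnion Sc)
    (hdisj : ∀ i < m, ∀ j < m, i ≠ j → Disjoint (Sc i) (Sc j))
    (hcard : ∀ i < m, (Sc i).card = k / m)
    (hstrip : ∀ i < m, ∀ p ∈ Sc i, ξ i ≤ p 0 ∧ p 0 ≤ ξ (i + 1)) :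
    ∑ i ∈ Finset.Ioo 0 (m - 1), wx (Sc i) ≤ wx S / ((m : ℝ) - 2) := by
  set n := k / m with hn
  have hmono : ∀ a b : ℕ, a ≤ b → b ≤ m → ξ a ≤ ξ b := by
    intro a b hab hbm
    induction b, hab using Nat.le_induction with
    | base => exact le_rfl
    | succ b hab ih => exact le_trans (ih (by omega)) (hξ b (by omega))
  set D := ξ (m-1) - ξ 1 with hD
  have hD0 : 0 ≤ D := by
    have := hmono 1 (m-1) (by omega) (by omega); linarith
  -- upper bound on each middle strip
  have hupper : ∀ i ∈ Finset.Ioo 0 (m-1),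
      wx (Sc i) ≤ (n:ℝ)^2/2 * (ξ (i+1) - ξ i) := by
    intro i hi
    rw [Finset.mem_Ioo] at hi
    have him : i < m := by omega
    have hsum : ∑ p ∈ Sc i, ∑ q ∈ Sc i, |p 0 - q 0|
        ≤ (n:ℝ)^2 * (ξ (i+1) - ξ i) := by
      calc ∑ p ∈ Sc i, ∑ q ∈ Sc i, |p 0 - q 0|
          ≤ ∑ _p ∈ Sc i, ∑ _q ∈ Sc i, (ξ (i+1) - ξ i) := by
            apply Finset.sum_le_sum; intro p hp
            apply Finset.sum_le_sum; intro q hq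
            have h1 := hstrip i him p hp
            have h2 := hstrip i him q hq
            rw [abs_sub_le_iff]
            constructor <;> linarith [h1.1, h1.2, h2.1, h2.2]
        _ = (n:ℝ)^2 * (ξ (i+1) - ξ i) := by
            simp [Finset.sum_const, hcard i him]; ring
    unfold wx; linarith
  have hIoo : Finset.Ioo 0 (m-1) = Finset.Ico 1 (m-1) := by
    ext x; simp; omega
  have hLHS : ∑ i ∈ Finset.Ioo 0 (m-1), wx (Sc i) ≤ (n:ℝ)^2/2 * D := by
    calc ∑ i ∈ Finset.Ioo 0 (m-1), wx (Sc i)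
        ≤ ∑ i ∈ Finset.Ioo 0 (m-1), (n:ℝ)^2/2 * (ξ (i+1) - ξ i) :=
          Finset.sum_le_sum hupper
      _ = (n:ℝ)^2/2 * D := by
          rw [← Finset.mul_sum, hIoo, tele_sum ξ 1 (m-1) (by omega)]
  -- split the big sum
  have hpair : Set.PairwiseDisjoint (↑(Finset.range m)) Sc := by
    intro i hi j hj hij
    exact hdisj i (Finset.mem_range.mp hi) j (Finset.mem_range.mp hj) hij
  have hsplit : ∀ F : (Fin 2 → ℝ) → ℝ,
      ∑ p ∈ S, F p = ∑ j ∈ Finset.range m, ∑ p ∈ Sc j, F p := by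
    intro F; rw [hunion, Finset.sum_biUnion hpair]
  set B : ℕ → ℕ → ℝ := fun j j' => ∑ p ∈ Sc j, ∑ q ∈ Sc j', |p 0 - q 0| with hBdef
  have hT : ∑ p ∈ S, ∑ q ∈ S, |p 0 - q 0|
      = ∑ j ∈ Finset.range m, ∑ j' ∈ Finset.range m, B j j' := by
    rw [hsplit fun p => ∑ q ∈ S, |p 0 - q 0|]
    apply Finset.sum_congr rfl
    intro j _
    calc ∑ p ∈ Sc j, ∑ q ∈ S, |p 0 - q 0|
        = ∑ p ∈ Sc j, ∑ j' ∈ Finset.range m, ∑ q ∈ Sc j', |p 0 - q 0| := by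
          apply Finset.sum_congr rfl; intro p _; exact hsplit _
      _ = ∑ j' ∈ Finset.range m, B j j' := Finset.sum_comm
  have hBnn : ∀ j j', 0 ≤ B j j' := by
    intro j j'
    apply Finset.sum_nonneg; intro p _
    apply Finset.sum_nonneg; intro q _
    exact abs_nonneg _
  have hB0 : ∀ j' < m, (n:ℝ)^2 * (ξ j' - ξ 1) ≤ B 0 j' := by
    intro j' hj'
    calc (n:ℝ)^2 * (ξ j' - ξ 1)
        = ∑ _p ∈ Sc 0, ∑ _q ∈ Sc j', (ξ j' - ξ 1) := by
          simp [Finset.sum_const, hcard 0 (by omega), hcard j' hj']; ring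
      _ ≤ B 0 j' := by
          apply Finset.sum_le_sum; intro p hp
          apply Finset.sum_le_sum; intro q hq
          have h1 := hstrip 0 (by omega) p hp
          have h2 := hstrip j' hj' q hq
          calc ξ j' - ξ 1 ≤ q 0 - p 0 := by linarith [h1.2, h2.1]
            _ ≤ |q 0 - p 0| := le_abs_self _
            _ = |p 0 - q 0| := abs_sub_comm _ _
  have hBm : ∀ j < m, (n:ℝ)^2 * (ξ (m-1) - ξ (j+1)) ≤ B (m-1) j := by
    intro j hj
    calc (n:ℝ)^2 * (ξ (m-1) - ξ (j+1))
        = ∑ _p ∈ Sc (m-1), ∑ _q ∈ Sc j, (ξ (m-1) - ξ (j+1)) := by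
          simp [Finset.sum_const, hcard (m-1) (by omega), hcard j hj]; ring
      _ ≤ B (m-1) j := by
          apply Finset.sum_le_sum; intro p hp
          apply Finset.sum_le_sum; intro q hq
          have h1 := hstrip (m-1) (by omega) p hp
          have h2 := hstrip j hj q hq
          calc ξ (m-1) - ξ (j+1) ≤ p 0 - q 0 := by linarith [h1.1, h2.2]
            _ ≤ |p 0 - q 0| := le_abs_self _
  set row : ℕ → ℝ := fun j => ∑ j' ∈ Finset.range m, B j j' with hrowdef
  have hrownn : ∀ j, 0 ≤ row j :=
    fun j => Finset.sum_nonneg fun j' _ => hBnn j j'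
  have hrows : row 0 + row (m-1) ≤ ∑ j ∈ Finset.range m, row j := by
    have hsub : ({0, m-1} : Finset ℕ) ⊆ Finset.range m := by
      intro x hx; simp at hx; rcases hx with h | h <;> simp [h] <;> omega
    have := Finset.sum_le_sum_of_subset_of_nonneg hsub
      (fun j _ _ => hrownn j)
    rwa [Finset.sum_pair (by omega : (0:ℕ) ≠ m-1)] at this
  have hrow0 : ∑ j' ∈ Finset.Ico 1 m, (n:ℝ)^2 * (ξ j' - ξ 1) ≤ row 0 := by
    calc ∑ j' ∈ Finset.Ico 1 m, (n:ℝ)^2 * (ξ j' - ξ 1)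
        ≤ ∑ j' ∈ Finset.Ico 1 m, B 0 j' := by
          apply Finset.sum_le_sum; intro j' hj'
          exact hB0 j' (by simp at hj'; omega)
      _ ≤ row 0 := by
          apply Finset.sum_le_sum_of_subset_of_nonneg
          · intro x hx; simp at hx ⊢; omega
          · intro j _ _; exact hBnn 0 j
  have hrowm : ∑ j ∈ Finset.range (m-1), (n:ℝ)^2 * (ξ (m-1) - ξ (j+1)) ≤ row (m-1) := by
    calc ∑ j ∈ Finset.range (m-1), (n:ℝ)^2 * (ξ (m-1) - ξ (j+1))
        ≤ ∑ j ∈ Finset.range (m-1), B (m-1) j := by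
          apply Finset.sum_le_sum; intro j hj
          exact hBm j (by simp at hj; omega)
      _ ≤ row (m-1) := by
          apply Finset.sum_le_sum_of_subset_of_nonneg
          · intro x hx; simp at hx ⊢; omega
          · intro j _ _; exact hBnn (m-1) j
  -- combine the two row sums
  have hkey : ∑ j' ∈ Finset.Ico 1 m, (n:ℝ)^2 * (ξ j' - ξ 1)
      + ∑ j ∈ Finset.range (m-1), (n:ℝ)^2 * (ξ (m-1) - ξ (j+1))
      = ((m:ℝ) - 1) * ((n:ℝ)^2 * D) := by
    rw [Finset.sum_Ico_eq_sum_range]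
    have hm1 : m - 1 = m - 1 := rfl
    rw [← Finset.sum_add_distrib]
    have : ∀ i ∈ Finset.range (m-1),
        (n:ℝ)^2 * (ξ (1+i) - ξ 1) + (n:ℝ)^2 * (ξ (m-1) - ξ (i+1))
        = (n:ℝ)^2 * D := by
      intro i _
      have : (1+i) = (i+1) := by omega
      rw [this, hD]; ring
    rw [Finset.sum_congr rfl this, Finset.sum_const, nsmul_eq_mul, Finset.card_range]
    have : ((m-1 : ℕ) : ℝ) = (m:ℝ) - 1 := by
      have : (1:ℕ) ≤ m := by omega
      push_cast [Nat.cast_sub this]; ring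
    rw [this]
  have hwxS : ((m:ℝ) - 1) * ((n:ℝ)^2 * D) / 2 ≤ wx S := by
    unfold wx
    rw [hT]
    have hr : (Finset.range m).sum row = ∑ j ∈ Finset.range m, row j := rfl
    rw [hr]
    have h : ((m:ℝ) - 1) * ((n:ℝ)^2 * D) ≤ ∑ j ∈ Finset.range m, row j := by
      rw [← hkey]; linarith [hrow0, hrowm, hrows]
    gcongr
  have hm2 : (0:ℝ) < (m:ℝ) - 2 := by
    have : (3:ℝ) ≤ (m:ℝ) := by exact_mod_cast hm
    linarith
  rw [le_div_iff₀ hm2]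
  have hn2 : (0:ℝ) ≤ (n:ℝ)^2 := sq_nonneg _
  have h1 : (∑ i ∈ Finset.Ioo 0 (m-1), wx (Sc i)) * ((m:ℝ) - 2)
      ≤ ((n:ℝ)^2/2 * D) * ((m:ℝ) - 2) := by
    apply mul_le_mul_of_nonneg_right hLHS (le_of_lt hm2)
  have h2 : ((n:ℝ)^2/2 * D) * ((m:ℝ) - 2) ≤ ((m:ℝ) - 1) * ((n:ℝ)^2 * D) / 2 := by
    nlinarith [mul_nonneg hn2 hD0]
  linarith
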